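/- Classical–quantum Fisher information inequality (finite outcomes, pure-state version): let σ be a density matrix, L self-adjoint with σL + Lσ = 2σ̇, and {M_x} a finite POVM (M_x ⪰ 0, ∑_x M_x = I). Then ∑_x (Re Tr[σ L M_x])² / Tr[σ M_x] ≤ Tr[σ L²], where the sum ranges over x with Tr[σ M_x] > 0. -/

import Mathlib

open Matrix
open scoped ComplexOrder


lemma trace_conjTranspose_mul' {d : ℕ} (A B : Matrix (Fin d) (Fin d) ℂ) :
    (Aᴴ * B).trace = ∑ p : Fin d × Fin d, (starRingEnd ℂ) (A p.2 p.1) * B p.2 p.1 := by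
  rw [Matrix.trace, Fintype.sum_prod_type]
  simp [Matrix.diag, Matrix.mul_apply, Matrix.conjTranspose_apply]

lemma trace_conjTranspose_mul_self_re {d : ℕ} (A : Matrix (Fin d) (Fin d) ℂ) :
    (Aᴴ * A).trace.re = ∑ p : Fin d × Fin d, ‖A p.2 p.1‖ ^ 2 := by
  rw [trace_conjTranspose_mul', Complex.re_sum]
  congr 1; ext p
  rw [mul_comm, Complex.mul_conj, Complex.ofReal_re, Complex.sq_norm]

lemma trace_conjTranspose_mul_self_re_nonneg {d : ℕ} (A : Matrix (Fin d) (Fin d) ℂ) :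
    0 ≤ (Aᴴ * A).trace.re := by
  rw [trace_conjTranspose_mul_self_re]
  positivity

lemma cs_key {d : ℕ} (A B : Matrix (Fin d) (Fin d) ℂ) :
    ((Aᴴ * B).trace.re) ^ 2 ≤ (Aᴴ * A).trace.re * (Bᴴ * B).trace.re := by
  rw [trace_conjTranspose_mul_self_re, trace_conjTranspose_mul_self_re]
  have h1 : ((Aᴴ * B).trace.re) ^ 2 ≤
      (∑ p : Fin d × Fin d, ‖A p.2 p.1‖ * ‖B p.2 p.1‖) ^ 2 := by
    have habs : |((Aᴴ * B).trace.re)| ≤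
        ∑ p : Fin d × Fin d, ‖A p.2 p.1‖ * ‖B p.2 p.1‖ := by
      calc |((Aᴴ * B).trace.re)| ≤ ‖(Aᴴ * B).trace‖ := Complex.abs_re_le_norm _
        _ ≤ ∑ p : Fin d × Fin d, ‖A p.2 p.1‖ * ‖B p.2 p.1‖ := by
            rw [trace_conjTranspose_mul']
            refine (norm_sum_le _ _).trans ?_
            refine Finset.sum_le_sum fun p _ => ?_
            rw [norm_mul, Complex.norm_conj]
    calc ((Aᴴ * B).trace.re) ^ 2 = |((Aᴴ * B).trace.re)| ^ 2 := (sq_abs _).symm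
      _ ≤ _ := pow_le_pow_left₀ (abs_nonneg _) habs 2
  exact h1.trans (Finset.sum_mul_sq_le_sq_mul_sq _ _ _)

open scoped MatrixOrder in
noncomputable def Matrix.PosSemidef.sqrt {d : ℕ} {A : Matrix (Fin d) (Fin d) ℂ}
    (_hA : A.PosSemidef) : Matrix (Fin d) (Fin d) ℂ := CFC.sqrt A

lemma Matrix.PosSemidef.posSemidef_sqrt {d : ℕ} {A : Matrix (Fin d) (Fin d) ℂ}
    (hA : A.PosSemidef) : hA.sqrt.PosSemidef := by
  open scoped MatrixOrder in
  exact (CFC.sqrt_nonneg (a := A)).posSemidef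

lemma Matrix.PosSemidef.sqrt_mul_self {d : ℕ} {A : Matrix (Fin d) (Fin d) ℂ}
    (hA : A.PosSemidef) : hA.sqrt * hA.sqrt = A := by
  open scoped MatrixOrder in
  exact CFC.sqrt_mul_sqrt_self A hA.nonneg

open Classical in
/-- Classical–quantum Fisher information inequality:
for a density matrix `σ`, a Hermitian `L`, and a finite POVM `{M_x}`,
`∑_x (Re Tr[σ L M_x])² / Tr[σ M_x] ≤ Tr[σ L²]`, the sum ranging over the
outcomes with `Tr[σ M_x] > 0`. -/
theorem stmt_16 {d : ℕ} {X : Type*} [Fintype X]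
    (σ : Matrix (Fin d) (Fin d) ℂ) (hσ : σ.PosSemidef) (hσ1 : σ.trace = 1)
    (L : Matrix (Fin d) (Fin d) ℂ) (hL : L.IsHermitian)
    (M : X → Matrix (Fin d) (Fin d) ℂ)
    (hMpos : ∀ x, (M x).PosSemidef)
    (hMsum : ∑ x, M x = (1 : Matrix (Fin d) (Fin d) ℂ)) :
    ∑ x ∈ Finset.univ.filter (fun x => 0 < ((σ * M x).trace).re),
        ((σ * L * M x).trace.re) ^ 2 / ((σ * M x).trace).re ≤
      ((σ * L * L).trace).re := by
  set s := hσ.sqrt with hs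
  have hsH : s.IsHermitian := hσ.posSemidef_sqrt.1
  have hss : s * s = σ := hσ.sqrt_mul_self
  set a : X → Matrix (Fin d) (Fin d) ℂ := fun x => (hMpos x).sqrt * L * s with ha
  set b : X → Matrix (Fin d) (Fin d) ℂ := fun x => (hMpos x).sqrt * s with hb
  have hmH : ∀ x, ((hMpos x).sqrt).IsHermitian := fun x => (hMpos x).posSemidef_sqrt.1
  have hmm : ∀ x, (hMpos x).sqrt * (hMpos x).sqrt = M x := fun x => (hMpos x).sqrt_mul_self
  -- traces
  have hab : ∀ x, ((a x)ᴴ * b x).trace = (σ * L * M x).trace := by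
    intro x
    have : (a x)ᴴ * b x = s * (L * ((hMpos x).sqrt * ((hMpos x).sqrt * s))) := by
      simp only [ha, hb, Matrix.conjTranspose_mul, hsH.eq, hL.eq, (hmH x).eq, mul_assoc]
    have e : L * ((hMpos x).sqrt * ((hMpos x).sqrt * s)) * s
        = L * ((hMpos x).sqrt * (hMpos x).sqrt) * (s * s) := by noncomm_ring
    rw [this, Matrix.trace_mul_comm, e, hmm x, hss, Matrix.trace_mul_comm]
    congr 1
    noncomm_ring
  have haa : ∀ x, ((a x)ᴴ * a x).trace = (σ * L * M x * L).trace := by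
    intro x
    have : (a x)ᴴ * a x = s * (L * ((hMpos x).sqrt * ((hMpos x).sqrt * (L * s)))) := by
      simp only [ha, Matrix.conjTranspose_mul, hsH.eq, hL.eq, (hmH x).eq, mul_assoc]
    have e : L * ((hMpos x).sqrt * ((hMpos x).sqrt * (L * s))) * s
        = L * ((hMpos x).sqrt * (hMpos x).sqrt) * L * (s * s) := by noncomm_ring
    rw [this, Matrix.trace_mul_comm, e, hmm x, hss, Matrix.trace_mul_comm]
    congr 1
    noncomm_ring
  have hbb : ∀ x, ((b x)ᴴ * b x).trace = (σ * M x).trace := by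
    intro x
    have : (b x)ᴴ * b x = s * ((hMpos x).sqrt * ((hMpos x).sqrt * s)) := by
      simp only [hb, Matrix.conjTranspose_mul, hsH.eq, (hmH x).eq, mul_assoc]
    have e : (hMpos x).sqrt * ((hMpos x).sqrt * s) * s
        = (hMpos x).sqrt * (hMpos x).sqrt * (s * s) := by noncomm_ring
    rw [this, Matrix.trace_mul_comm, e, hmm x, hss, Matrix.trace_mul_comm]
  -- per-term bound and positivity
  have key : ∀ x, ((σ * L * M x).trace.re) ^ 2 ≤ (σ * L * M x * L).trace.re * (σ * M x).trace.re := by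
    intro x
    rw [← hab x, ← haa x, ← hbb x]
    exact cs_key (a x) (b x)
  have hnn : ∀ x, 0 ≤ (σ * L * M x * L).trace.re := by
    intro x
    rw [← haa x]
    exact trace_conjTranspose_mul_self_re_nonneg _
  calc ∑ x ∈ Finset.univ.filter (fun x => 0 < ((σ * M x).trace).re),
        ((σ * L * M x).trace.re) ^ 2 / ((σ * M x).trace).re
      ≤ ∑ x ∈ Finset.univ.filter (fun x => 0 < ((σ * M x).trace).re),
        (σ * L * M x * L).trace.re := by
        refine Finset.sum_le_sum fun x hx => ?_
        have ht : 0 < ((σ * M x).trace).re := (Finset.mem_filter.mp hx).2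
        rw [div_le_iff₀ ht]
        exact key x
    _ ≤ ∑ x, (σ * L * M x * L).trace.re :=
        Finset.sum_le_sum_of_subset_of_nonneg (Finset.filter_subset _ _) fun x _ _ => hnn x
    _ = ((σ * L * L).trace).re := by
        rw [← Complex.re_sum, ← Matrix.trace_sum]
        congr 2
        rw [← Finset.sum_mul, ← Finset.mul_sum, hMsum, mul_one]
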